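/- arXiv:2505.07274 — 5 statements merged into one kernel-verified Lean document; each statement's English description precedes it below -/
import Mathlib

section
/- (Naive additive KL bound; the paper's 'Naive Additive (2κ′ + 2ε/τ)' bound.) The KL divergence between the cached and true Gibbs posteriors satisfies D_KL(π̃ ∥ π*) ≤ 2·(κ + ε/τ). -/
/-- **Naive additive KL bound** (`2κ′ + 2ε/τ`).
Under the same hypotheses as Theorem 1, the KL divergence between the cached and
true Gibbs posteriors satisfies `D_KL(π̃ ∥ π*) ≤ 2·(κ + ε/τ)`. -/
theorem kl_naive_additive_bound
    {A : Type*} [Fintype A] [Nonempty A]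
    (p phat : A → ℝ) (hp : ∀ a, 0 < p a) (hphat : ∀ a, 0 < phat a)
    (hpsum : ∑ a, p a = 1) (hphatsum : ∑ a, phat a = 1)
    (Qstar Q : A → ℝ) (τ : ℝ) (hτ : 0 < τ)
    (κ ε : ℝ) (hκ : 0 ≤ κ) (hε : 0 ≤ ε)
    (hprior : ∀ a, |Real.log (phat a) - Real.log (p a)| ≤ κ)
    (hQ : ∀ a, |Q a - Qstar a| ≤ ε) :
    ∑ a, (phat a * Real.exp (Q a / τ) / (∑ b, phat b * Real.exp (Q b / τ))) *
        Real.log ((phat a * Real.exp (Q a / τ) / (∑ b, phat b * Real.exp (Q b / τ))) /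
          (p a * Real.exp (Qstar a / τ) / (∑ b, p b * Real.exp (Qstar b / τ))))
      ≤ 2 * (κ + ε / τ) := by
  set M := κ + ε / τ with hM
  set Zt := ∑ b, phat b * Real.exp (Q b / τ) with hZt
  set Zs := ∑ b, p b * Real.exp (Qstar b / τ) with hZs
  clear_value M Zt Zs
  have hZtpos : 0 < Zt := by
    rw [hZt]
    exact Finset.sum_pos (fun b _ => mul_pos (hphat b) (Real.exp_pos _)) Finset.univ_nonempty
  have hZspos : 0 < Zs := by
    rw [hZs]
    exact Finset.sum_pos (fun b _ => mul_pos (hp b) (Real.exp_pos _)) Finset.univ_nonempty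
  have hZ : Zs ≤ Real.exp M * Zt := by
    rw [hZs, hZt, Finset.mul_sum]
    apply Finset.sum_le_sum
    intro b _
    have h1 : p b ≤ Real.exp κ * phat b := by
      have h := (abs_le.mp (hprior b)).1
      have hlog : Real.log (p b) ≤ κ + Real.log (phat b) := by linarith
      calc p b = Real.exp (Real.log (p b)) := (Real.exp_log (hp b)).symm
        _ ≤ Real.exp (κ + Real.log (phat b)) := Real.exp_le_exp.mpr hlog
        _ = Real.exp κ * phat b := by rw [Real.exp_add, Real.exp_log (hphat b)]
    have h2 : Real.exp (Qstar b / τ) ≤ Real.exp (ε / τ) * Real.exp (Q b / τ) := by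
      rw [← Real.exp_add]
      apply Real.exp_le_exp.mpr
      have h := (abs_le.mp (hQ b)).1
      have hsub : (Qstar b - Q b) / τ ≤ ε / τ := by gcongr; linarith
      have := sub_div (Qstar b) (Q b) τ
      linarith
    calc p b * Real.exp (Qstar b / τ)
        ≤ (Real.exp κ * phat b) * (Real.exp (ε / τ) * Real.exp (Q b / τ)) :=
          mul_le_mul h1 h2 (Real.exp_pos _).le (mul_pos (Real.exp_pos κ) (hphat b)).le
      _ = Real.exp M * (phat b * Real.exp (Q b / τ)) := by
          rw [hM, Real.exp_add]; ring
  have hlogZ : Real.log Zs ≤ M + Real.log Zt := by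
    calc Real.log Zs ≤ Real.log (Real.exp M * Zt) := Real.log_le_log hZspos hZ
      _ = M + Real.log Zt := by
          rw [Real.log_mul (Real.exp_ne_zero M) (ne_of_gt hZtpos), Real.log_exp]
  have key : ∀ a, Real.log ((phat a * Real.exp (Q a / τ) / Zt) /
      (p a * Real.exp (Qstar a / τ) / Zs)) ≤ 2 * M := by
    intro a
    have hx : (0:ℝ) < phat a * Real.exp (Q a / τ) := mul_pos (hphat a) (Real.exp_pos _)
    have hy : (0:ℝ) < p a * Real.exp (Qstar a / τ) := mul_pos (hp a) (Real.exp_pos _)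
    rw [Real.log_div (ne_of_gt (div_pos hx hZtpos)) (ne_of_gt (div_pos hy hZspos)),
        Real.log_div (ne_of_gt hx) (ne_of_gt hZtpos),
        Real.log_div (ne_of_gt hy) (ne_of_gt hZspos),
        Real.log_mul (ne_of_gt (hphat a)) (Real.exp_ne_zero _),
        Real.log_mul (ne_of_gt (hp a)) (Real.exp_ne_zero _),
        Real.log_exp, Real.log_exp]
    have hp1 := (abs_le.mp (hprior a)).2
    have hq1 := (abs_le.mp (hQ a)).2
    have hsub : (Q a - Qstar a) / τ ≤ ε / τ := by gcongr
    have := sub_div (Q a) (Qstar a) τ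
    linarith [hlogZ, hM]
  have hw : ∀ a, 0 ≤ phat a * Real.exp (Q a / τ) / Zt := fun a =>
    (div_pos (mul_pos (hphat a) (Real.exp_pos _)) hZtpos).le
  calc ∑ a, (phat a * Real.exp (Q a / τ) / Zt) *
        Real.log ((phat a * Real.exp (Q a / τ) / Zt) /
          (p a * Real.exp (Qstar a / τ) / Zs))
      ≤ ∑ a, (phat a * Real.exp (Q a / τ) / Zt) * (2 * M) :=
        Finset.sum_le_sum (fun a _ => mul_le_mul_of_nonneg_left (key a) (hw a))
    _ = 2 * M := by
        rw [← Finset.sum_mul, ← Finset.sum_div, ← hZt, div_self (ne_of_gt hZtpos), one_mul]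
end

section
/- (Pointwise log-ratio bound between cached and true posteriors.) For every action a ∈ A, the Gibbs posteriors satisfy |log π̃(a) − log π*(a)| ≤ 2·(κ + ε/τ). -/
/-- **Pointwise log-ratio bound between cached and true posteriors.**
For every action `a`, the Gibbs posteriors `π̃(a) = p̂(a)·exp(Q(a)/τ)/Z̃` and
`π*(a) = p(a)·exp(Q*(a)/τ)/Z*` satisfy `|log π̃(a) − log π*(a)| ≤ 2·(κ + ε/τ)`. -/
theorem pointwise_log_ratio_bound
    {A : Type*} [Fintype A] [Nonempty A]
    (p phat : A → ℝ) (hp : ∀ a, 0 < p a) (hphat : ∀ a, 0 < phat a)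
    (hpsum : ∑ a, p a = 1) (hphatsum : ∑ a, phat a = 1)
    (Qstar Q : A → ℝ) (τ : ℝ) (hτ : 0 < τ)
    (κ ε : ℝ) (hκ : 0 ≤ κ) (hε : 0 ≤ ε)
    (hprior : ∀ a, |Real.log (phat a) - Real.log (p a)| ≤ κ)
    (hQ : ∀ a, |Q a - Qstar a| ≤ ε) :
    ∀ a : A,
      |Real.log (phat a * Real.exp (Q a / τ) / (∑ b, phat b * Real.exp (Q b / τ)))
        - Real.log (p a * Real.exp (Qstar a / τ) / (∑ b, p b * Real.exp (Qstar b / τ)))|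
      ≤ 2 * (κ + ε / τ) := by
  intro a
  set c : ℝ := κ + ε / τ with hc
  have hcnn : 0 ≤ c := by positivity
  have hQτ : ∀ b, |Q b / τ - Qstar b / τ| ≤ ε / τ := by
    intro b
    rw [div_sub_div_same, abs_div, abs_of_pos hτ]
    gcongr
    exact hQ b
  -- termwise bounds between the two partition functions
  have key : ∀ (q1 q2 : A → ℝ) (r1 r2 : A → ℝ),
      (∀ b, 0 < r1 b) → (∀ b, 0 < r2 b) →
      (∀ b, Real.log (r1 b) - Real.log (r2 b) ≤ κ) →
      (∀ b, q1 b / τ - q2 b / τ ≤ ε / τ) →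
      ∀ b, r1 b * Real.exp (q1 b / τ) ≤ Real.exp c * (r2 b * Real.exp (q2 b / τ)) := by
    intro q1 q2 r1 r2 hr1 hr2 hlog hq b
    have e1 : r1 b * Real.exp (q1 b / τ) = Real.exp (Real.log (r1 b) + q1 b / τ) := by
      rw [Real.exp_add, Real.exp_log (hr1 b)]
    have e2 : r2 b * Real.exp (q2 b / τ) = Real.exp (Real.log (r2 b) + q2 b / τ) := by
      rw [Real.exp_add, Real.exp_log (hr2 b)]
    rw [e1, e2, ← Real.exp_add]
    apply Real.exp_le_exp.2
    have := hlog b; have := hq b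
    rw [hc]; linarith
  set Zg : ℝ := ∑ b, phat b * Real.exp (Q b / τ) with hZg
  set Zf : ℝ := ∑ b, p b * Real.exp (Qstar b / τ) with hZf
  have hZgpos : 0 < Zg :=
    Finset.sum_pos (fun b _ => mul_pos (hphat b) (Real.exp_pos _)) Finset.univ_nonempty
  have hZfpos : 0 < Zf :=
    Finset.sum_pos (fun b _ => mul_pos (hp b) (Real.exp_pos _)) Finset.univ_nonempty
  have h1 : Zg ≤ Real.exp c * Zf := by
    rw [Finset.mul_sum]
    apply Finset.sum_le_sum
    intro b _
    exact key Q Qstar phat p hphat hp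
      (fun b => (abs_le.1 (hprior b)).2)
      (fun b => (abs_le.1 (hQτ b)).2) b
  have h2 : Zf ≤ Real.exp c * Zg := by
    rw [Finset.mul_sum]
    apply Finset.sum_le_sum
    intro b _
    refine key Qstar Q p phat hp hphat ?_ ?_ b
    · intro b; have := (abs_le.1 (hprior b)).1; linarith
    · intro b; have := (abs_le.1 (hQτ b)).1; linarith
  have hlogZ : |Real.log Zg - Real.log Zf| ≤ c := by
    rw [abs_le]
    constructor
    · have := Real.log_le_log hZfpos h2
      rw [Real.log_mul (Real.exp_ne_zero c) hZgpos.ne', Real.log_exp] at this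
      linarith
    · have := Real.log_le_log hZgpos h1
      rw [Real.log_mul (Real.exp_ne_zero c) hZfpos.ne', Real.log_exp] at this
      linarith
  have eg : Real.log (phat a * Real.exp (Q a / τ) / Zg)
      = Real.log (phat a) + Q a / τ - Real.log Zg := by
    rw [Real.log_div (mul_pos (hphat a) (Real.exp_pos _)).ne' hZgpos.ne',
      Real.log_mul (hphat a).ne' (Real.exp_ne_zero _), Real.log_exp]
  have ef : Real.log (p a * Real.exp (Qstar a / τ) / Zf)
      = Real.log (p a) + Qstar a / τ - Real.log Zf := by
    rw [Real.log_div (mul_pos (hp a) (Real.exp_pos _)).ne' hZfpos.ne',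
      Real.log_mul (hp a).ne' (Real.exp_ne_zero _), Real.log_exp]
  rw [eg, ef]
  have h3 := hprior a
  have h4 := hQτ a
  have : |Real.log (phat a) + Q a / τ - Real.log Zg
      - (Real.log (p a) + Qstar a / τ - Real.log Zf)|
      ≤ |Real.log (phat a) - Real.log (p a)| + |Q a / τ - Qstar a / τ|
        + |Real.log Zg - Real.log Zf| := by
    have := abs_sub_abs_le_abs_sub (Real.log Zg) (Real.log Zf)
    calc _ = |(Real.log (phat a) - Real.log (p a)) + (Q a / τ - Qstar a / τ)
          + -(Real.log Zg - Real.log Zf)| := by ring_nf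
      _ ≤ _ := by
          refine (abs_add_le _ _).trans ?_
          rw [abs_neg]
          exact add_le_add (abs_add_le _ _) le_rfl
  refine this.trans ?_
  linarith [hlogZ.trans_eq hc]
end

section
/- (Theorem 1 under uniform state visitation, μ(s) = E_s[μ(s)].) If κ + ε/τ > 0, then D_KL(π̃ ∥ π*) ≤ 2·(κ + ε/τ)/(1 − exp(−(κ + ε/τ))). -/
/-- **Theorem 1 under uniform state visitation** (`μ(s) = E_s[μ(s)]`, i.e. ratio 1).
If `κ + ε/τ > 0`, then `D_KL(π̃ ∥ π*) ≤ 2·(κ + ε/τ)/(1 − exp(−(κ + ε/τ)))`. -/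
theorem kl_bound_uniform_visitation
    {A : Type*} [Fintype A] [Nonempty A]
    (p phat : A → ℝ) (hp : ∀ a, 0 < p a) (hphat : ∀ a, 0 < phat a)
    (hpsum : ∑ a, p a = 1) (hphatsum : ∑ a, phat a = 1)
    (Qstar Q : A → ℝ) (τ : ℝ) (hτ : 0 < τ)
    (κ ε : ℝ) (hκ : 0 ≤ κ) (hε : 0 ≤ ε)
    (hpos : 0 < κ + ε / τ)
    (hprior : ∀ a, |Real.log (phat a) - Real.log (p a)| ≤ κ)
    (hQ : ∀ a, |Q a - Qstar a| ≤ ε) :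
    ∑ a, (phat a * Real.exp (Q a / τ) / (∑ b, phat b * Real.exp (Q b / τ))) *
        Real.log ((phat a * Real.exp (Q a / τ) / (∑ b, phat b * Real.exp (Q b / τ))) /
          (p a * Real.exp (Qstar a / τ) / (∑ b, p b * Real.exp (Qstar b / τ))))
      ≤ 2 * (κ + ε / τ) / (1 - Real.exp (-(κ + ε / τ))) := by
  set δ := κ + ε / τ with hδ
  set Zt := ∑ b, phat b * Real.exp (Q b / τ) with hZt
  set Zs := ∑ b, p b * Real.exp (Qstar b / τ) with hZs
  have hZtpos : 0 < Zt :=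
    Finset.sum_pos (fun b _ => mul_pos (hphat b) (Real.exp_pos _)) Finset.univ_nonempty
  have hZspos : 0 < Zs :=
    Finset.sum_pos (fun b _ => mul_pos (hp b) (Real.exp_pos _)) Finset.univ_nonempty
  -- Z* ≤ exp δ * Z̃
  have hZle : Zs ≤ Real.exp δ * Zt := by
    rw [hZs, hZt, Finset.mul_sum]
    apply Finset.sum_le_sum
    intro b _
    have h1 : p b ≤ Real.exp κ * phat b := by
      have := (abs_le.mp (hprior b)).1
      have : Real.log (p b) ≤ κ + Real.log (phat b) := by linarith
      calc p b = Real.exp (Real.log (p b)) := (Real.exp_log (hp b)).symm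
        _ ≤ Real.exp (κ + Real.log (phat b)) := Real.exp_le_exp.mpr this
        _ = Real.exp κ * phat b := by rw [Real.exp_add, Real.exp_log (hphat b)]
    have h2 : Real.exp (Qstar b / τ) ≤ Real.exp (ε / τ) * Real.exp (Q b / τ) := by
      rw [← Real.exp_add, Real.exp_le_exp]
      have := (abs_le.mp (hQ b)).1
      rw [← add_div, div_le_div_iff_of_pos_right hτ]
      linarith
    calc p b * Real.exp (Qstar b / τ)
        ≤ (Real.exp κ * phat b) * (Real.exp (ε / τ) * Real.exp (Q b / τ)) := by
          exact mul_le_mul h1 h2 (Real.exp_pos _).le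
            (mul_nonneg (Real.exp_pos _).le (hphat b).le)
      _ = Real.exp δ * (phat b * Real.exp (Q b / τ)) := by
          rw [hδ, Real.exp_add]; ring
  have hlogZ : Real.log Zs - Real.log Zt ≤ δ := by
    have := Real.log_le_log hZspos hZle
    rw [Real.log_mul (Real.exp_pos δ).ne' hZtpos.ne', Real.log_exp] at this
    linarith
  -- pointwise bound: log ratio ≤ 2δ
  have hpt : ∀ a, Real.log ((phat a * Real.exp (Q a / τ) / Zt) /
      (p a * Real.exp (Qstar a / τ) / Zs)) ≤ 2 * δ := by
    intro a
    have hnum1 : (0:ℝ) < phat a * Real.exp (Q a / τ) := mul_pos (hphat a) (Real.exp_pos _)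
    have hnum2 : (0:ℝ) < p a * Real.exp (Qstar a / τ) := mul_pos (hp a) (Real.exp_pos _)
    rw [Real.log_div (div_pos hnum1 hZtpos).ne' (div_pos hnum2 hZspos).ne',
        Real.log_div hnum1.ne' hZtpos.ne', Real.log_div hnum2.ne' hZspos.ne',
        Real.log_mul (hphat a).ne' (Real.exp_pos _).ne',
        Real.log_mul (hp a).ne' (Real.exp_pos _).ne',
        Real.log_exp, Real.log_exp]
    have h1 := (abs_le.mp (hprior a)).2
    have h2 : Q a / τ - Qstar a / τ ≤ ε / τ := by
      rw [div_sub_div_same, div_le_div_iff_of_pos_right hτ]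
      exact (abs_le.mp (hQ a)).2
    have hδ' : Real.log Zs - Real.log Zt ≤ κ + ε / τ := by rw [← hδ]; exact hlogZ
    linarith
  -- sum bound: KL ≤ 2δ
  have hsum : ∑ a, (phat a * Real.exp (Q a / τ) / Zt) *
      Real.log ((phat a * Real.exp (Q a / τ) / Zt) /
        (p a * Real.exp (Qstar a / τ) / Zs)) ≤ 2 * δ := by
    have hπsum : ∑ a, phat a * Real.exp (Q a / τ) / Zt = 1 := by
      rw [← Finset.sum_div, ← hZt, div_self hZtpos.ne']
    calc ∑ a, (phat a * Real.exp (Q a / τ) / Zt) *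
          Real.log ((phat a * Real.exp (Q a / τ) / Zt) /
            (p a * Real.exp (Qstar a / τ) / Zs))
        ≤ ∑ a, (phat a * Real.exp (Q a / τ) / Zt) * (2 * δ) := by
          apply Finset.sum_le_sum
          intro a _
          exact mul_le_mul_of_nonneg_left (hpt a)
            (div_nonneg (mul_nonneg (hphat a).le (Real.exp_pos _).le) hZtpos.le)
      _ = 2 * δ := by rw [← Finset.sum_mul, hπsum, one_mul]
  -- 2δ ≤ 2δ/(1 - exp(-δ))
  have hden : 0 < 1 - Real.exp (-δ) := by
    have : Real.exp (-δ) < 1 := Real.exp_lt_one_iff.mpr (by linarith)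
    linarith
  have hfinal : 2 * δ ≤ 2 * δ / (1 - Real.exp (-δ)) := by
    rw [le_div_iff₀ hden]
    have : 1 - Real.exp (-δ) ≤ 1 := by linarith [Real.exp_pos (-δ)]
    nlinarith
  exact hsum.trans hfinal
end

section
/- (Reverse-direction KL bound, by symmetry of the hypotheses.) The KL divergence in the reverse direction satisfies D_KL(π* ∥ π̃) ≤ 2·(κ + ε/τ). -/
/-- **Reverse-direction KL bound** (by symmetry of the hypotheses).
Under the same hypotheses as Theorem 1, `D_KL(π* ∥ π̃) ≤ 2·(κ + ε/τ)`. -/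
theorem kl_reverse_bound
    {A : Type*} [Fintype A] [Nonempty A]
    (p phat : A → ℝ) (hp : ∀ a, 0 < p a) (hphat : ∀ a, 0 < phat a)
    (hpsum : ∑ a, p a = 1) (hphatsum : ∑ a, phat a = 1)
    (Qstar Q : A → ℝ) (τ : ℝ) (hτ : 0 < τ)
    (κ ε : ℝ) (hκ : 0 ≤ κ) (hε : 0 ≤ ε)
    (hprior : ∀ a, |Real.log (phat a) - Real.log (p a)| ≤ κ)
    (hQ : ∀ a, |Q a - Qstar a| ≤ ε) :
    ∑ a, (p a * Real.exp (Qstar a / τ) / (∑ b, p b * Real.exp (Qstar b / τ))) *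
        Real.log ((p a * Real.exp (Qstar a / τ) / (∑ b, p b * Real.exp (Qstar b / τ))) /
          (phat a * Real.exp (Q a / τ) / (∑ b, phat b * Real.exp (Q b / τ))))
      ≤ 2 * (κ + ε / τ) := by
  set Zs := ∑ b, p b * Real.exp (Qstar b / τ) with hZs
  set Zt := ∑ b, phat b * Real.exp (Q b / τ) with hZt
  have hx : ∀ a, 0 < p a * Real.exp (Qstar a / τ) :=
    fun a => mul_pos (hp a) (Real.exp_pos _)
  have hy : ∀ a, 0 < phat a * Real.exp (Q a / τ) :=
    fun a => mul_pos (hphat a) (Real.exp_pos _)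
  have hZsp : 0 < Zs := Finset.sum_pos (fun a _ => hx a) Finset.univ_nonempty
  have hZtp : 0 < Zt := Finset.sum_pos (fun a _ => hy a) Finset.univ_nonempty
  have hZ : Real.log Zt - Real.log Zs ≤ κ + ε / τ := by
    have hle : Zt ≤ Zs * Real.exp (κ + ε / τ) := by
      rw [hZs, hZt, Finset.sum_mul]
      apply Finset.sum_le_sum
      intro a _
      have h1 : phat a ≤ p a * Real.exp κ := by
        have h := (abs_le.mp (hprior a)).2
        calc phat a = Real.exp (Real.log (phat a)) := (Real.exp_log (hphat a)).symm
          _ ≤ Real.exp (Real.log (p a) + κ) := Real.exp_le_exp.mpr (by linarith)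
          _ = p a * Real.exp κ := by rw [Real.exp_add, Real.exp_log (hp a)]
      have h2 : Real.exp (Q a / τ) ≤ Real.exp (Qstar a / τ + ε / τ) := by
        apply Real.exp_le_exp.mpr
        have := (abs_le.mp (hQ a)).2
        rw [← add_div]
        exact (div_le_div_iff_of_pos_right hτ).mpr (by linarith)
      calc phat a * Real.exp (Q a / τ)
          ≤ (p a * Real.exp κ) * Real.exp (Qstar a / τ + ε / τ) := by
            apply mul_le_mul h1 h2 (Real.exp_pos _).le (mul_pos (hp a) (Real.exp_pos _)).le
        _ = p a * Real.exp (Qstar a / τ) * Real.exp (κ + ε / τ) := by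
            rw [Real.exp_add, Real.exp_add]; ring
    have := Real.log_le_log hZtp hle
    rwa [Real.log_mul (ne_of_gt hZsp) (Real.exp_ne_zero _), Real.log_exp,
      ← sub_le_iff_le_add'] at this
  have hpt : ∀ a, Real.log ((p a * Real.exp (Qstar a / τ) / Zs) /
      (phat a * Real.exp (Q a / τ) / Zt)) ≤ 2 * (κ + ε / τ) := by
    intro a
    rw [Real.log_div (ne_of_gt (div_pos (hx a) hZsp)) (ne_of_gt (div_pos (hy a) hZtp)),
      Real.log_div (ne_of_gt (hx a)) (ne_of_gt hZsp),
      Real.log_div (ne_of_gt (hy a)) (ne_of_gt hZtp),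
      Real.log_mul (ne_of_gt (hp a)) (Real.exp_ne_zero _),
      Real.log_mul (ne_of_gt (hphat a)) (Real.exp_ne_zero _),
      Real.log_exp, Real.log_exp]
    have h1 := (abs_le.mp (hprior a)).1
    have h2 := (abs_le.mp (hQ a)).1
    have h3 : Qstar a / τ - Q a / τ ≤ ε / τ := by
      rw [div_sub_div_same ..]
      exact (div_le_div_iff_of_pos_right hτ).mpr (by linarith)
    linarith
  calc ∑ a, (p a * Real.exp (Qstar a / τ) / Zs) *
        Real.log ((p a * Real.exp (Qstar a / τ) / Zs) /
          (phat a * Real.exp (Q a / τ) / Zt))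
      ≤ ∑ a, (p a * Real.exp (Qstar a / τ) / Zs) * (2 * (κ + ε / τ)) := by
        apply Finset.sum_le_sum
        intro a _
        exact mul_le_mul_of_nonneg_left (hpt a) (div_pos (hx a) hZsp).le
    _ = (∑ a, p a * Real.exp (Qstar a / τ)) / Zs * (2 * (κ + ε / τ)) := by
        rw [← Finset.sum_mul, ← Finset.sum_div]
    _ = 2 * (κ + ε / τ) := by rw [← hZs, div_self (ne_of_gt hZsp), one_mul]
end

section
/- (Convergence corollary under geometrically improving cache accuracy.) Suppose the cache error bounds satisfy κ_{t+1} ≤ β·κ_t for all t, with κ_0 ≥ 0 and 0 ≤ β < 1, and the temperatures satisfy τ_t ≥ τ_min for all t. Then for every t ∈ ℕ: (i) κ_t ≤ β^t·κ_0; (ii) D_KL(π̃_t ∥ π*_t) ≤ 2·(β^t·κ_0 + ε/τ_min); and (iii) limsup_{t→∞} D_KL(π̃_t ∥ π*_t) ≤ 2·ε/τ_min. -/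
open Real Filter

section Aux
variable {A : Type*} [Fintype A] [Nonempty A]

lemma aux_log_sum_sub (w w' : A → ℝ) (hw : ∀ a, 0 < w a) (hw' : ∀ a, 0 < w' a)
    (δ : ℝ) (hδ : ∀ a, Real.log (w' a) - Real.log (w a) ≤ δ) :
    Real.log (∑ b, w' b) - Real.log (∑ b, w b) ≤ δ := by
  have hS : (0:ℝ) < ∑ b, w b := Finset.sum_pos (fun b _ => hw b) Finset.univ_nonempty
  have hS' : (0:ℝ) < ∑ b, w' b := Finset.sum_pos (fun b _ => hw' b) Finset.univ_nonempty
  have h1 : ∑ b, w' b ≤ Real.exp δ * ∑ b, w b := by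
    rw [Finset.mul_sum]
    apply Finset.sum_le_sum
    intro b _
    have hb := hδ b
    calc w' b = Real.exp (Real.log (w' b)) := (Real.exp_log (hw' b)).symm
      _ ≤ Real.exp (δ + Real.log (w b)) := by
          apply Real.exp_le_exp.2; linarith
      _ = Real.exp δ * w b := by rw [Real.exp_add, Real.exp_log (hw b)]
  have h2 := Real.log_le_log hS' h1
  rw [Real.log_mul (Real.exp_ne_zero δ) (ne_of_gt hS), Real.log_exp] at h2
  linarith

lemma gibbs_kl_abs_le (w w' : A → ℝ) (hw : ∀ a, 0 < w a) (hw' : ∀ a, 0 < w' a)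
    (δ : ℝ) (hδ : ∀ a, |Real.log (w' a) - Real.log (w a)| ≤ δ) :
    |∑ a, (w' a / ∑ b, w' b) *
        Real.log ((w' a / ∑ b, w' b) / (w a / ∑ b, w b))| ≤ 2 * δ := by
  have hS : (0:ℝ) < ∑ b, w b := Finset.sum_pos (fun b _ => hw b) Finset.univ_nonempty
  have hS' : (0:ℝ) < ∑ b, w' b := Finset.sum_pos (fun b _ => hw' b) Finset.univ_nonempty
  have hub : ∀ a, |Real.log ((w' a / ∑ b, w' b) / (w a / ∑ b, w b))| ≤ 2 * δ := by
    intro a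
    have hZ : Real.log (∑ b, w' b) - Real.log (∑ b, w b) ≤ δ :=
      aux_log_sum_sub w w' hw hw' δ (fun a => (abs_le.1 (hδ a)).2)
    have hZ' : Real.log (∑ b, w b) - Real.log (∑ b, w' b) ≤ δ :=
      aux_log_sum_sub w' w hw' hw δ (fun a => by
        have := (abs_le.1 (hδ a)).1; linarith)
    have ha := abs_le.1 (hδ a)
    rw [Real.log_div (ne_of_gt (div_pos (hw' a) hS')) (ne_of_gt (div_pos (hw a) hS)),
        Real.log_div (ne_of_gt (hw' a)) (ne_of_gt hS'),
        Real.log_div (ne_of_gt (hw a)) (ne_of_gt hS)]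
    rw [abs_le]
    constructor <;> nlinarith [ha.1, ha.2]
  calc |∑ a, (w' a / ∑ b, w' b) *
        Real.log ((w' a / ∑ b, w' b) / (w a / ∑ b, w b))|
      ≤ ∑ a, |(w' a / ∑ b, w' b) *
        Real.log ((w' a / ∑ b, w' b) / (w a / ∑ b, w b))| :=
        Finset.abs_sum_le_sum_abs _ _
    _ ≤ ∑ a, (w' a / ∑ b, w' b) * (2 * δ) := by
        apply Finset.sum_le_sum
        intro a _
        rw [abs_mul, abs_of_pos (div_pos (hw' a) hS')]
        exact mul_le_mul_of_nonneg_left (hub a) (le_of_lt (div_pos (hw' a) hS'))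
    _ = 2 * δ := by
        rw [← Finset.sum_mul, ← Finset.sum_div, div_self (ne_of_gt hS'), one_mul]

end Aux

/-- **Convergence corollary under geometrically improving cache accuracy.**
If the cache error bounds satisfy `κ_{t+1} ≤ β·κ_t` with `κ_0 ≥ 0`, `0 ≤ β < 1`,
and temperatures satisfy `τ_t ≥ τ_min > 0`, then for every `t`:
(i) `κ_t ≤ β^t·κ_0`; (ii) `D_KL(π̃_t ∥ π*_t) ≤ 2·(β^t·κ_0 + ε/τ_min)`;
(iii) `limsup_t D_KL(π̃_t ∥ π*_t) ≤ 2·ε/τ_min`. -/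
theorem convergence_corollary_geometric_cache
    {A : Type*} [Fintype A] [Nonempty A]
    (p : A → ℝ) (hp : ∀ a, 0 < p a) (hpsum : ∑ a, p a = 1)
    (Qstar : A → ℝ) (ε : ℝ) (hε : 0 ≤ ε) (τmin : ℝ) (hτmin : 0 < τmin)
    (phat : ℕ → A → ℝ) (hphat : ∀ t a, 0 < phat t a)
    (hphatsum : ∀ t, ∑ a, phat t a = 1)
    (Q : ℕ → A → ℝ) (τ : ℕ → ℝ) (hτ : ∀ t, 0 < τ t) (hτge : ∀ t, τmin ≤ τ t)
    (κ : ℕ → ℝ) (hκ : ∀ t, 0 ≤ κ t)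
    (hprior : ∀ t a, |Real.log (phat t a) - Real.log (p a)| ≤ κ t)
    (hQ : ∀ t a, |Q t a - Qstar a| ≤ ε)
    (β : ℝ) (hβ0 : 0 ≤ β) (hβ1 : β < 1) (hκ0 : 0 ≤ κ 0)
    (hgeom : ∀ t, κ (t + 1) ≤ β * κ t)
    (D : ℕ → ℝ)
    (hD : ∀ t, D t =
      ∑ a, (phat t a * Real.exp (Q t a / τ t) / (∑ b, phat t b * Real.exp (Q t b / τ t))) *
        Real.log ((phat t a * Real.exp (Q t a / τ t) /
              (∑ b, phat t b * Real.exp (Q t b / τ t))) /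
          (p a * Real.exp (Qstar a / τ t) / (∑ b, p b * Real.exp (Qstar b / τ t))))) :
    (∀ t, κ t ≤ β ^ t * κ 0)
    ∧ (∀ t, D t ≤ 2 * (β ^ t * κ 0 + ε / τmin))
    ∧ Filter.limsup D Filter.atTop ≤ 2 * ε / τmin := by
  -- (i) geometric decay of κ
  have hgeo : ∀ t, κ t ≤ β ^ t * κ 0 := by
    intro t
    induction t with
    | zero => simp
    | succ n ih =>
      calc κ (n + 1) ≤ β * κ n := hgeom n
        _ ≤ β * (β ^ n * κ 0) := mul_le_mul_of_nonneg_left ih hβ0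
        _ = β ^ (n + 1) * κ 0 := by ring
  -- KL bound with absolute value
  have habs : ∀ t, |D t| ≤ 2 * (κ t + ε / τ t) := by
    intro t
    rw [hD t]
    apply gibbs_kl_abs_le (fun a => p a * Real.exp (Qstar a / τ t))
      (fun a => phat t a * Real.exp (Q t a / τ t))
      (fun a => mul_pos (hp a) (Real.exp_pos _)) (fun a => mul_pos (hphat t a) (Real.exp_pos _))
    intro a
    rw [Real.log_mul (ne_of_gt (hphat t a)) (Real.exp_ne_zero _),
        Real.log_mul (ne_of_gt (hp a)) (Real.exp_ne_zero _),
        Real.log_exp, Real.log_exp]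
    have h1 := hprior t a
    have h2 := hQ t a
    have h3 : |Q t a / τ t - Qstar a / τ t| ≤ ε / τ t := by
      rw [div_sub_div_same, abs_div, abs_of_pos (hτ t)]
      exact div_le_div_of_nonneg_right h2 (hτ t).le |>.trans le_rfl
    calc |Real.log (phat t a) + Q t a / τ t - (Real.log (p a) + Qstar a / τ t)|
        = |(Real.log (phat t a) - Real.log (p a)) + (Q t a / τ t - Qstar a / τ t)| := by
          ring_nf
      _ ≤ |Real.log (phat t a) - Real.log (p a)| + |Q t a / τ t - Qstar a / τ t| :=
          abs_add_le _ _
      _ ≤ κ t + ε / τ t := add_le_add h1 h3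
  have hετ : ∀ t, ε / τ t ≤ ε / τmin := by
    intro t
    apply div_le_div_of_nonneg_left hε hτmin (hτge t) |>.trans le_rfl
  -- (ii)
  have hDbound : ∀ t, D t ≤ 2 * (β ^ t * κ 0 + ε / τmin) := by
    intro t
    have := (abs_le.1 (habs t)).2
    have h1 := hgeo t
    have h2 := hετ t
    linarith
  refine ⟨hgeo, hDbound, ?_⟩
  -- (iii) limsup
  have hκle : ∀ t, κ t ≤ κ 0 := fun t =>
    (hgeo t).trans (by
      have : β ^ t ≤ 1 := pow_le_one₀ hβ0 hβ1.le
      nlinarith)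
  have hlow : ∀ t, -(2 * (κ 0 + ε / τmin)) ≤ D t := by
    intro t
    have := (abs_le.1 (habs t)).1
    have h1 := hκle t
    have h2 := hετ t
    linarith
  set g : ℕ → ℝ := fun t => 2 * (β ^ t * κ 0 + ε / τmin) with hg
  have hgt : Tendsto g atTop (nhds (2 * (0 * κ 0 + ε / τmin))) := by
    apply Tendsto.const_mul
    apply Tendsto.add_const
    exact (tendsto_pow_atTop_nhds_zero_of_lt_one hβ0 hβ1).mul_const _
  have hglim : limsup g atTop = 2 * ε / τmin := by
    rw [hgt.limsup_eq]; ring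
  have hcb : IsCoboundedUnder (· ≤ ·) atTop D := isCoboundedUnder_le_of_le atTop hlow
  have hbd : IsBoundedUnder (· ≤ ·) atTop g := hgt.isBoundedUnder_le
  calc limsup D atTop ≤ limsup g atTop :=
        limsup_le_limsup (Eventually.of_forall hDbound) hcb hbd
    _ = 2 * ε / τmin := hglim
end
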